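/- In the group PSL₂(F_p) for a prime p ≡ 1 mod 4 with p > 5, fix i ∈ F_p with i² = −1, and let r₀ = ±[[0,i],[i,0]], r₁ = ±[[i,i],[0,−i]], r₂ = ±[[i,0],[0,−i]] (images in PSL₂ of these SL₂ matrices). Then r₀, r₁, r₂ each have order 2, r₀ and r₂ commute, r₀r₁ has order 3, and r₁r₂ has order p. -/
import Mathlib

open Matrix Matrix.SpecialLinearGroup

section aux

variable {p : ℕ} [Fact p.Prime]

lemma scalar_fin_two (r : ZMod p) :
    (Matrix.scalar (Fin 2) r : Matrix (Fin 2) (Fin 2) (ZMod p)) = !![r, 0; 0, r] := by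
  ext a b
  fin_cases a <;> fin_cases b <;>
    simp [Matrix.scalar, Matrix.diagonal]

lemma mem_center_of_neg_one {A : Matrix.SpecialLinearGroup (Fin 2) (ZMod p)}
    (h : (A : Matrix (Fin 2) (Fin 2) (ZMod p)) = !![-1, 0; 0, -1]) :
    A ∈ Subgroup.center (Matrix.SpecialLinearGroup (Fin 2) (ZMod p)) := by
  rw [Matrix.SpecialLinearGroup.mem_center_iff]
  refine ⟨-1, by norm_num, ?_⟩
  rw [scalar_fin_two, h]

lemma upper_pow (n : ℕ) :
    (!![(-1 : ZMod p), 1; 0, -1]) ^ n =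
      !![(-1 : ZMod p) ^ n, (n : ZMod p) * (-1) ^ (n + 1); 0, (-1) ^ n] := by
  induction n with
  | zero => simp [Matrix.one_fin_two]
  | succ k ih =>
    rw [pow_succ, ih, Matrix.mul_fin_two]
    congr 1 <;> push_cast <;> ring

end aux

/-- Example 5B: in `PSL₂(F_p)` for a prime `p ≡ 1 (mod 4)`, `p > 5`, with `i² = −1`,
the images of `[[0,i],[i,0]]`, `[[i,i],[0,−i]]`, `[[i,0],[0,−i]]` are involutions,
the first and third commute, their product with the second has order 3, resp. `p`. -/
theorem stmt_18 (p : ℕ) [Fact p.Prime] (hp4 : p % 4 = 1) (hp5 : 5 < p)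
    (i : ZMod p) (hi : i ^ 2 = -1)
    (r₀ r₁ r₂ : Matrix.SpecialLinearGroup (Fin 2) (ZMod p))
    (h0 : (r₀ : Matrix (Fin 2) (Fin 2) (ZMod p)) = !![0, i; i, 0])
    (h1 : (r₁ : Matrix (Fin 2) (Fin 2) (ZMod p)) = !![i, i; 0, -i])
    (h2 : (r₂ : Matrix (Fin 2) (Fin 2) (ZMod p)) = !![i, 0; 0, -i]) :
    orderOf (QuotientGroup.mk' (Subgroup.center _) r₀) = 2 ∧
    orderOf (QuotientGroup.mk' (Subgroup.center _) r₁) = 2 ∧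
    orderOf (QuotientGroup.mk' (Subgroup.center _) r₂) = 2 ∧
    QuotientGroup.mk' (Subgroup.center _) r₀ * QuotientGroup.mk' (Subgroup.center _) r₂ =
      QuotientGroup.mk' (Subgroup.center _) r₂ * QuotientGroup.mk' (Subgroup.center _) r₀ ∧
    orderOf (QuotientGroup.mk' (Subgroup.center _) r₀ *
      QuotientGroup.mk' (Subgroup.center _) r₁) = 3 ∧
    orderOf (QuotientGroup.mk' (Subgroup.center _) r₁ *
      QuotientGroup.mk' (Subgroup.center _) r₂) = p := by
  haveI : Fact (Nat.Prime 2) := ⟨Nat.prime_two⟩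
  haveI : Fact (Nat.Prime 3) := ⟨Nat.prime_three⟩
  have hp := (Fact.out : p.Prime)
  set N := Subgroup.center (Matrix.SpecialLinearGroup (Fin 2) (ZMod p)) with hN
  set φ := QuotientGroup.mk' N with hφ
  -- i ≠ 0
  have hi0 : i ≠ 0 := by
    intro h
    rw [h] at hi
    simp at hi
  -- membership criterion for powers
  have hker : ∀ g : Matrix.SpecialLinearGroup (Fin 2) (ZMod p), φ g = 1 ↔ g ∈ N :=
    fun g => QuotientGroup.eq_one_iff g
  -- nonmembership from off-diagonal entry
  have hnm : ∀ g : Matrix.SpecialLinearGroup (Fin 2) (ZMod p),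
      (g : Matrix (Fin 2) (Fin 2) (ZMod p)) 0 1 ≠ 0 → g ∉ N := by
    intro g hg hgN
    obtain ⟨r, -, hr⟩ := Matrix.SpecialLinearGroup.mem_center_iff.mp hgN
    apply hg
    rw [← hr, scalar_fin_two]
    simp
  -- squares are -1
  have sq : ∀ g : Matrix.SpecialLinearGroup (Fin 2) (ZMod p),
      (g : Matrix (Fin 2) (Fin 2) (ZMod p)) * (g : Matrix (Fin 2) (Fin 2) (ZMod p)) = !![-1, 0; 0, -1] → φ g ^ 2 = 1 := by
    intro g hg
    rw [← map_pow, hker]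
    apply mem_center_of_neg_one
    rw [Matrix.SpecialLinearGroup.coe_pow, pow_two, hg]
  have hi2 : i * i = -1 := by rw [← pow_two]; exact hi
  refine ⟨?_, ?_, ?_, ?_, ?_, ?_⟩
  · apply orderOf_eq_prime (sq r₀ (by rw [h0, Matrix.mul_fin_two]; congr 1 <;> simp [hi2]))
    rw [Ne, hker]
    exact fun h => hnm r₀ (by rw [h0]; simpa using hi0) h
  · apply orderOf_eq_prime (sq r₁ (by rw [h1, Matrix.mul_fin_two]; congr 1 <;> ring_nf <;> simp [hi2, hi]))
    rw [Ne, hker]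
    exact fun h => hnm r₁ (by rw [h1]; simpa using hi0) h
  · apply orderOf_eq_prime (sq r₂ (by rw [h2, Matrix.mul_fin_two]; congr 1 <;> ring_nf <;> simp [hi2, hi]))
    rw [Ne, hker]
    intro h
    obtain ⟨r, -, hr⟩ := Matrix.SpecialLinearGroup.mem_center_iff.mp h
    rw [h2, scalar_fin_two] at hr
    have e1 : r = i := by have := congrFun (congrFun hr 0) 0; simpa using this
    have e2 : r = -i := by have := congrFun (congrFun hr 1) 1; simpa using this
    have h2i : (2 : ZMod p) * i = 0 := by rw [e1] at e2; linear_combination e2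
    have h2ne : (2 : ZMod p) ≠ 0 := by
      have : ((2 : ℕ) : ZMod p) ≠ 0 := by
        rw [Ne, ZMod.natCast_eq_zero_iff]
        intro h
        have := (Nat.prime_dvd_prime_iff_eq hp Nat.prime_two).mp h
        omega
      simpa using this
    exact hi0 ((mul_eq_zero.mp h2i).resolve_left h2ne)
  · -- commuting
    rw [← _root_.map_mul, ← _root_.map_mul, ← div_eq_one, ← _root_.map_div]
    rw [hker]
    have hinv : ((r₂ * r₀)⁻¹ : Matrix.SpecialLinearGroup (Fin 2) (ZMod p)).val
        = !![0, 1; -1, 0] := by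
      rw [Matrix.SpecialLinearGroup.coe_inv, Matrix.SpecialLinearGroup.coe_mul, h2, h0,
        Matrix.mul_fin_two, Matrix.adjugate_fin_two]
      congr 1 <;> simp [hi2]
    apply mem_center_of_neg_one
    rw [div_eq_mul_inv, Matrix.SpecialLinearGroup.coe_mul, hinv,
      Matrix.SpecialLinearGroup.coe_mul, h0, h2, Matrix.mul_fin_two, Matrix.mul_fin_two]
    congr 1 <;> simp [hi2]
  · -- order 3
    rw [← _root_.map_mul]
    have hval : ((r₀ * r₁ : Matrix.SpecialLinearGroup (Fin 2) (ZMod p)) : Matrix (Fin 2) (Fin 2) (ZMod p)) = !![0, 1; -1, -1] := by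
      rw [Matrix.SpecialLinearGroup.coe_mul, h0, h1, Matrix.mul_fin_two]
      congr 1 <;> simp [hi2] <;> ring_nf <;> simp [hi2, hi]
    apply orderOf_eq_prime
    · rw [← map_pow, hker]
      have : (r₀ * r₁) ^ 3 = 1 := by
        apply Subtype.val_injective
        rw [Matrix.SpecialLinearGroup.coe_pow, hval]
        rw [pow_succ, pow_two, Matrix.mul_fin_two, Matrix.mul_fin_two]
        rw [show ((1 : Matrix.SpecialLinearGroup (Fin 2) (ZMod p)) : Matrix (Fin 2) (Fin 2) (ZMod p)) = 1 from rfl, Matrix.one_fin_two]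
        congr 1 <;> ring
      rw [this]
      exact Subgroup.one_mem N
    · rw [Ne, hker]
      exact fun h => hnm _ (by rw [hval]; simp) h
  · -- order p
    rw [← _root_.map_mul]
    have hval : ((r₁ * r₂ : Matrix.SpecialLinearGroup (Fin 2) (ZMod p)) : Matrix (Fin 2) (Fin 2) (ZMod p)) = !![-1, 1; 0, -1] := by
      rw [Matrix.SpecialLinearGroup.coe_mul, h1, h2, Matrix.mul_fin_two]
      congr 1 <;> ring_nf <;> simp [hi2, hi]
    apply orderOf_eq_prime
    · rw [← map_pow, hker]
      apply mem_center_of_neg_one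
      rw [Matrix.SpecialLinearGroup.coe_pow, hval, upper_pow]
      have hodd : Odd p := hp.odd_of_ne_two (by omega)
      rw [Odd.neg_one_pow hodd, ZMod.natCast_self]
      norm_num
    · rw [Ne, hker]
      exact fun h => hnm _ (by rw [hval]; simp) h
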